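/- Let m_1,…,m_n be positive integers, let 1 ≤ t ≤ n with m_t ≥ 2, and let (x_1,…,x_n) lie in the open unit polydisc with x_t ≠ 0. Then the function u ↦ Li_{m_1,…,m_n}(x_1,…,x_{t-1},u,x_{t+1},…,x_n) is complex differentiable at u = x_t with derivative Li_{m_1,…,m_{t-1},m_t−1,m_{t+1},…,m_n}(x_1,…,x_n) / x_t. -/

import Mathlib

/-- The multiple polylogarithm `Li_{m₁,…,mₙ}(x₁,…,xₙ)`, defined as the sum of the series
`∑_{0<k₁<⋯<kₙ} x₁^{k₁}⋯xₙ^{kₙ}/(k₁^{m₁}⋯kₙ^{mₙ})`. -/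
noncomputable def multiPolylog (n : ℕ) (m : Fin n → ℕ) (x : Fin n → ℂ) : ℂ :=
  ∑' k : {k : Fin n → ℕ // StrictMono k ∧ ∀ i, 0 < k i},
    ∏ i, x i ^ (k.1 i) / ((k.1 i : ℂ)) ^ (m i)

lemma summable_pi_prod : ∀ (n : ℕ) (w : Fin n → ℕ → ℝ), (∀ i j, 0 ≤ w i j) →
    (∀ i, Summable (w i)) → Summable (fun k : Fin n → ℕ => ∏ i, w i (k i)) := by
  intro n
  induction n with
  | zero =>
    intro w _ _
    have : Finite (Fin 0 → ℕ) := Finite.of_subsingleton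
    exact Summable.of_finite
  | succ n ih =>
    intro w hw0 hw
    have h2 : Summable (fun k : Fin n → ℕ => ∏ i, w i.succ (k i)) :=
      ih (fun i => w i.succ) (fun i j => hw0 _ _) (fun i => hw i.succ)
    have h1 := Summable.mul_of_nonneg (hw 0) h2 (fun j => hw0 0 j)
        (fun k => Finset.prod_nonneg fun i _ => hw0 _ _)
    have h3 := ((Fin.consEquiv fun _ : Fin (n + 1) => ℕ).symm.summable_iff).2 h1
    convert h3 using 1
    ext k
    simp [Fin.consEquiv, Fin.prod_univ_succ, Fin.tail]

set_option maxHeartbeats 2000000 in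
/-- If `m_t ≥ 2` and `(x₁,…,xₙ)` lies in the open unit polydisc with `x_t ≠ 0`,
then `u ↦ Li_{m₁,…,mₙ}(x₁,…,x_{t-1},u,x_{t+1},…,xₙ)` is complex differentiable at `u = x_t`
with derivative `Li_{m₁,…,m_t−1,…,mₙ}(x₁,…,xₙ)/x_t`. -/
theorem multiPolylog_hasDerivAt_of_two_le (n : ℕ) (m : Fin n → ℕ) (hm : ∀ i, 0 < m i)
    (t : Fin n) (ht : 2 ≤ m t) (x : Fin n → ℂ) (hx : ∀ i, ‖x i‖ < 1) (hxt : x t ≠ 0) :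
    HasDerivAt (fun u : ℂ => multiPolylog n m (Function.update x t u))
      (multiPolylog n (Function.update m t (m t - 1)) x / x t) (x t) := by
  classical
  set A := {k : Fin n → ℕ // StrictMono k ∧ ∀ i, 0 < k i} with hA
  set ρ : ℝ := (‖x t‖ + 1) / 2 with hρdef
  have hxtρ : ‖x t‖ < ρ := by rw [hρdef]; linarith [hx t]
  have hρ1 : ρ < 1 := by rw [hρdef]; linarith [hx t]
  have hρ0 : 0 ≤ ρ := (norm_nonneg _).trans hxtρ.le
  have hne : (Finset.univ : Finset (Fin n)).Nonempty := ⟨t, Finset.mem_univ t⟩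
  set r : ℝ := max ρ (Finset.univ.sup' hne fun i => ‖x i‖) with hrdef
  have hρr : ρ ≤ r := le_max_left _ _
  have hxr : ∀ i, ‖x i‖ ≤ r := by
    intro i
    refine le_trans ?_ (le_max_right _ _)
    exact Finset.le_sup' (fun i => ‖x i‖) (Finset.mem_univ i)
  have hr1 : r < 1 := max_lt hρ1 ((Finset.sup'_lt_iff hne).2 fun i _ => hx i)
  have hr0 : 0 ≤ r := hρ0.trans hρr
  -- weights
  set w : Fin n → ℕ → ℝ := fun i j => if i = t then (j : ℝ) * r ^ (j - 1) else r ^ j with hwdef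
  have hw0 : ∀ i j, 0 ≤ w i j := by
    intro i j; rw [hwdef]; dsimp only; split <;> positivity
  have hgeom : Summable (fun j : ℕ => r ^ j) := summable_geometric_of_lt_one hr0 hr1
  have hwsum : ∀ i, Summable (w i) := by
    intro i
    by_cases hit : i = t
    · have hrnorm : ‖r‖ < 1 := by rwa [Real.norm_eq_abs, abs_of_nonneg hr0]
      have h1 : Summable (fun j : ℕ => (j : ℝ) ^ 1 * r ^ j) :=
        summable_pow_mul_geometric_of_norm_lt_one 1 hrnorm
      have h2 : Summable (fun j : ℕ => ((j : ℝ) + 1) * r ^ j) := by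
        have h3 := h1.add hgeom
        convert h3 using 2 with j
        ring
      have h3 : Summable (fun j : ℕ => (j : ℝ) * r ^ (j - 1)) := by
        rw [← summable_nat_add_iff 1]
        simpa using h2
      simpa [hwdef, hit] using h3
    · simpa [hwdef, hit] using hgeom
  have hB := summable_pi_prod n w hw0 hwsum
  have hBsub : Summable (fun k : A => ∏ i, w i (k.1 i)) :=
    hB.comp_injective Subtype.val_injective
  -- the constant part of each term
  have hterm : ∀ k : A,
      (fun v : ℂ => ∏ i, Function.update x t v i ^ (k.1 i) / ((k.1 i : ℂ)) ^ (m i))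
      = fun v : ℂ => (v ^ (k.1 t) / ((k.1 t : ℂ)) ^ (m t)) *
          ∏ i ∈ Finset.univ.erase t, x i ^ (k.1 i) / ((k.1 i : ℂ)) ^ (m i) := by
    intro k
    funext v
    rw [← Finset.mul_prod_erase Finset.univ _ (Finset.mem_univ t)]
    congr 1
    · rw [Function.update_self]
    · exact Finset.prod_congr rfl fun i hi => by
        rw [Function.update_of_ne (Finset.ne_of_mem_erase hi)]
  have hderiv : ∀ (k : A) (u : ℂ), u ∈ Metric.ball (0 : ℂ) ρ →
      HasDerivAt (fun v : ℂ => ∏ i, Function.update x t v i ^ (k.1 i) / ((k.1 i : ℂ)) ^ (m i))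
        ((((k.1 t : ℂ)) * u ^ (k.1 t - 1) / ((k.1 t : ℂ)) ^ (m t)) *
          ∏ i ∈ Finset.univ.erase t, x i ^ (k.1 i) / ((k.1 i : ℂ)) ^ (m i)) u := by
    intro k u _
    rw [hterm k]
    exact ((hasDerivAt_pow (k.1 t) u).div_const _).mul_const _
  have hone_le : ∀ (k : A) (i : Fin n) (e : ℕ), (1 : ℝ) ≤ ((k.1 i : ℝ)) ^ e := by
    intro k i e
    exact one_le_pow₀ (by exact_mod_cast k.2.2 i)
  have hbound : ∀ (k : A) (u : ℂ), u ∈ Metric.ball (0 : ℂ) ρ →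
      ‖(((k.1 t : ℂ)) * u ^ (k.1 t - 1) / ((k.1 t : ℂ)) ^ (m t)) *
          ∏ i ∈ Finset.univ.erase t, x i ^ (k.1 i) / ((k.1 i : ℂ)) ^ (m i)‖
        ≤ ∏ i, w i (k.1 i) := by
    intro k u hu
    have hu' : ‖u‖ ≤ r := le_trans (mem_ball_zero_iff.1 hu).le hρr
    have hW : ∏ i, w i (k.1 i) = ((k.1 t : ℝ) * r ^ (k.1 t - 1)) *
        ∏ i ∈ Finset.univ.erase t, r ^ (k.1 i) := by
      rw [← Finset.mul_prod_erase Finset.univ _ (Finset.mem_univ t)]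
      congr 1
      · simp [hwdef]
      · exact Finset.prod_congr rfl fun i hi => by
          simp [hwdef, Finset.ne_of_mem_erase hi]
    rw [hW, norm_mul, norm_div, norm_mul, norm_pow, norm_pow, norm_prod]
    have A1 : ‖((k.1 t : ℂ))‖ * ‖u‖ ^ (k.1 t - 1) / ‖((k.1 t : ℂ))‖ ^ (m t)
        ≤ (k.1 t : ℝ) * r ^ (k.1 t - 1) := by
      rw [Complex.norm_natCast]
      refine le_trans (div_le_self (by positivity) (hone_le k t (m t))) ?_
      exact mul_le_mul_of_nonneg_left (pow_le_pow_left₀ (norm_nonneg u) hu' _)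
        (Nat.cast_nonneg _)
    have A2 : ∏ i ∈ Finset.univ.erase t, ‖x i ^ (k.1 i) / ((k.1 i : ℂ)) ^ (m i)‖
        ≤ ∏ i ∈ Finset.univ.erase t, r ^ (k.1 i) := by
      refine Finset.prod_le_prod (fun i _ => norm_nonneg _) (fun i _ => ?_)
      rw [norm_div, norm_pow, norm_pow, Complex.norm_natCast]
      refine le_trans (div_le_self (by positivity) (hone_le k i (m i))) ?_
      exact pow_le_pow_left₀ (norm_nonneg _) (hxr i) _
    exact mul_le_mul A1 A2 (Finset.prod_nonneg fun i _ => norm_nonneg _) (by positivity)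
  have hmem : x t ∈ Metric.ball (0 : ℂ) ρ := mem_ball_zero_iff.2 hxtρ
  have hgeompi : Summable (fun k : Fin n → ℕ => ∏ i : Fin n, r ^ (k i)) :=
    summable_pi_prod n (fun _ j => r ^ j) (fun i j => by positivity) (fun i => hgeom)
  have hgeomsub : Summable (fun k : A => ∏ i : Fin n, r ^ (k.1 i)) :=
    hgeompi.comp_injective Subtype.val_injective
  have hsum0 : Summable (fun k : A =>
      ∏ i, Function.update x t (x t) i ^ (k.1 i) / ((k.1 i : ℂ)) ^ (m i)) := by
    refine Summable.of_norm_bounded hgeomsub (fun k => ?_)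
    rw [Function.update_eq_self, norm_prod]
    refine Finset.prod_le_prod (fun i _ => norm_nonneg _) (fun i _ => ?_)
    rw [norm_div, norm_pow, norm_pow, Complex.norm_natCast]
    refine le_trans (div_le_self (by positivity) (hone_le k i (m i))) ?_
    exact pow_le_pow_left₀ (norm_nonneg _) (hxr i) _
  have key := hasDerivAt_tsum_of_isPreconnected hBsub Metric.isOpen_ball
    ((convex_ball (0 : ℂ) ρ).isPreconnected) hderiv hbound hmem hsum0 hmem
  have hfun : (fun u : ℂ => multiPolylog n m (Function.update x t u))
      = fun z : ℂ => ∑' k : A,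
          ∏ i, Function.update x t z i ^ (k.1 i) / ((k.1 i : ℂ)) ^ (m i) := rfl
  rw [hfun]
  refine key.congr_deriv ?_
  symm
  -- value of the derivative
  unfold multiPolylog; rw [← tsum_div_const]
  refine tsum_congr fun k => ?_
  rw [← Finset.mul_prod_erase Finset.univ _ (Finset.mem_univ t)]
  have hC : ∏ i ∈ Finset.univ.erase t, x i ^ (k.1 i) / ((k.1 i : ℂ)) ^ (Function.update m t (m t - 1) i)
      = ∏ i ∈ Finset.univ.erase t, x i ^ (k.1 i) / ((k.1 i : ℂ)) ^ (m i) :=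
    Finset.prod_congr rfl fun i hi => by
      rw [Function.update_of_ne (Finset.ne_of_mem_erase hi)]
  rw [hC, Function.update_self]
  obtain ⟨a, ha⟩ : ∃ a, k.1 t = a + 1 := ⟨k.1 t - 1, (Nat.succ_pred_eq_of_pos (k.2.2 t)).symm⟩
  obtain ⟨b, hb⟩ : ∃ b, m t = b + 1 := ⟨m t - 1, (Nat.succ_pred_eq_of_pos (hm t)).symm⟩
  rw [ha, hb]
  simp only [Nat.add_sub_cancel]
  have hc : ((a : ℂ) + 1) ≠ 0 := by exact_mod_cast Nat.cast_add_one_ne_zero (R := ℂ) a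
  set P : ℂ := ∏ i ∈ Finset.univ.erase t, x i ^ (k.1 i) / ((k.1 i : ℂ)) ^ (m i) with hPdef
  push_cast
  field_simp
  ring
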